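/- Let n ≥ k ≥ 3 be integers, let y ∈ ℝⁿ with 0 < ‖y‖ < 1, and let W be the Brendle–Hung vector field on the open unit ball minus {y}. Then lim_{x → y} ‖x − y‖^{k−2} · ⟨W(x), x − y⟩ = −(1/k)·(1 − ‖y‖²)^{k/2}. -/

import Mathlib

open RealInnerProductSpace Topology Filter

/-- The Brendle–Hung vector field on the unit ball of `ℝⁿ` minus the prescribed point `y`. -/
noncomputable def brendleHungW (n k : ℕ) (y : EuclideanSpace ℝ (Fin n)) :
    EuclideanSpace ℝ (Fin n) → EuclideanSpace ℝ (Fin n) := fun x =>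
  ((1 / (k : ℝ)) *
      (1 - (1 - 2 * ⟪x, y⟫ + ‖y‖ ^ 2) ^ ((k : ℝ) / 2) / ‖x - y‖ ^ k)) • (x - y) +
  ((1 / ((k : ℝ) - 2)) *
      ((1 - 2 * ⟪x, y⟫ + ‖y‖ ^ 2) ^ (((k : ℝ) - 2) / 2) / ‖x - y‖ ^ (k - 2) - 1)) • y

theorem stmt_16 (n k : ℕ) (hk : 3 ≤ k) (hkn : k ≤ n)
    (y : EuclideanSpace ℝ (Fin n)) (hy0 : 0 < ‖y‖) (hy1 : ‖y‖ < 1) :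
    Filter.Tendsto (fun x => ‖x - y‖ ^ (k - 2) * ⟪brendleHungW n k y x, x - y⟫)
      (𝓝[≠] y) (𝓝 (-(1 / (k : ℝ)) * (1 - ‖y‖ ^ 2) ^ ((k : ℝ) / 2))) := by
  obtain ⟨m, rfl⟩ : ∃ m, k = m + 3 := ⟨k - 3, by omega⟩
  set k : ℕ := m + 3 with hkdef
  set Q : EuclideanSpace ℝ (Fin n) → ℝ := fun x => 1 - 2 * ⟪x, y⟫ + ‖y‖ ^ 2 with hQ
  have hQy : Q y = 1 - ‖y‖ ^ 2 := by
    simp only [hQ, real_inner_self_eq_norm_sq]; ring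
  have hQpos : 0 < Q y := by rw [hQy]; nlinarith [hy0.le]
  set g : EuclideanSpace ℝ (Fin n) → ℝ := fun x =>
    (1 / (k : ℝ)) * (‖x - y‖ ^ k - (Q x) ^ ((k : ℝ) / 2)) +
    (1 / ((k : ℝ) - 2)) * ((Q x) ^ (((k : ℝ) - 2) / 2) - ‖x - y‖ ^ (k - 2)) * ⟪y, x - y⟫
    with hg
  have hQcont : ContinuousAt Q y := by
    apply ContinuousAt.add
    · exact (continuousAt_const.sub ((continuousAt_const.mul
        ((continuous_id.inner continuous_const).continuousAt))))
    · exact continuousAt_const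
  have hnorm : ContinuousAt (fun x : EuclideanSpace ℝ (Fin n) => ‖x - y‖) y :=
    ((continuous_id.sub continuous_const).norm).continuousAt
  have hgcont : ContinuousAt g y := by
    apply ContinuousAt.add
    · exact continuousAt_const.mul ((hnorm.pow k).sub
        (hQcont.rpow_const (Or.inl hQpos.ne')))
    · exact (continuousAt_const.mul ((hQcont.rpow_const (Or.inl hQpos.ne')).sub
        (hnorm.pow (k - 2)))).mul
        ((continuous_const.inner (continuous_id.sub continuous_const)).continuousAt)
  have hgy : g y = -(1 / (k : ℝ)) * (1 - ‖y‖ ^ 2) ^ ((k : ℝ) / 2) := by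
    simp only [hg, hQy, sub_self, norm_zero, inner_zero_right]
    rw [zero_pow (by omega : k ≠ 0)]
    ring
  have hgt : Tendsto g (𝓝[≠] y) (𝓝 (-(1 / (k : ℝ)) * (1 - ‖y‖ ^ 2) ^ ((k : ℝ) / 2))) := by
    rw [← hgy]; exact hgcont.continuousWithinAt.tendsto
  refine hgt.congr' ?_
  filter_upwards [self_mem_nhdsWithin] with x hx
  have hr : ‖x - y‖ ≠ 0 := by
    simpa [sub_eq_zero] using hx
  have h1 : k - 2 = m + 1 := by omega
  have h2 : ((k : ℝ)) = (m : ℝ) + 3 := by push_cast [hkdef]; ring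
  have expand : ⟪brendleHungW n k y x, x - y⟫ =
      ((1 / (k : ℝ)) * (1 - (Q x) ^ ((k : ℝ) / 2) / ‖x - y‖ ^ k)) * ‖x - y‖ ^ 2 +
      ((1 / ((k : ℝ) - 2)) * ((Q x) ^ (((k : ℝ) - 2) / 2) / ‖x - y‖ ^ (k - 2) - 1))
        * ⟪y, x - y⟫ := by
    simp only [brendleHungW, inner_add_left, real_inner_smul_left,
      real_inner_self_eq_norm_sq, ← hQ]
    rfl
  rw [expand, hg]
  beta_reduce
  rw [h1, h2]
  set r := ‖x - y‖ with hrdef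
  set a := (Q x) ^ (((m : ℝ) + 3) / 2) with hadef
  set b := (Q x) ^ (((m : ℝ) + 3 - 2) / 2) with hbdef
  set c := ⟪y, x - y⟫ with hcdef
  have hm3 : (m : ℝ) + 3 ≠ 0 := by positivity
  have hm1 : (m : ℝ) + 3 - 2 ≠ 0 := by
    have : (0:ℝ) ≤ (m:ℝ) := Nat.cast_nonneg m
    intro h; linarith
  rw [hkdef]
  field_simp
  ring
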